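/- arXiv:2410.07483 — 2 statements merged into one kernel-verified Lean document; each statement's English description precedes it below -/
import Mathlib

section
/- (Identification of principal scores without monotonicity.) Fix a reference index r ∈ {0,...,J} and assume e_{𝔤_r}(X) ≥ c > 0 P-a.s. For 𝔤 ∉ 𝒬 set ρ_𝔤(X) := e_𝔤(X)/e_{𝔤_r}(X); for w ∈ {1,...,J} set q_w(X) := Σ_{𝔤∉𝒬: 𝔤(w)=1} ρ_𝔤(X), with q_0(X) := 0 and q_{J+1}(X) := Σ_{𝔤∉𝒬} ρ_𝔤(X). Then P-almost surely: (a) e_{𝔤_r}(X)·(1 + q_{J−r+1}(X) − q_{J−r}(X)) = p_{J−r+1}(X) − p_{J−r}(X); (b) for every 𝔤 ∉ 𝒬, e_𝔤(X)·(1 + q_{J−r+1}(X) − q_{J−r}(X)) = ρ_𝔤(X)·(p_{J−r+1}(X) − p_{J−r}(X)); and (c) for every g ∈ {0,...,J}, e_{𝔤_g}(X) = p_{J−g+1}(X) − p_{J−g}(X) − e_{𝔤_r}(X)·(q_{J−g+1}(X) − q_{J−g}(X)). -/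
open MeasureTheory ProbabilityTheory

noncomputable section

namespace TruncationByDeath

variable {Ω : Type*} {𝒳 : Type*} [MeasurableSpace Ω] [MeasurableSpace 𝒳]

/-- The σ-algebra on `Ω` generated by the covariate map `X`. -/
def mX (X : Ω → 𝒳) : MeasurableSpace Ω := MeasurableSpace.comap X inferInstance

/-- Real-valued indicator of the event `{Z = z}`. -/
def indic (Z : Ω → ℕ) (z : ℕ) : Ω → ℝ := fun ω => if Z ω = z then 1 else 0

/-- Observed survival status `S := ∑_z 1(Z=z) ⬝ S_z`. -/
def Sobs (J : ℕ) (Z : Ω → ℕ) (S : ℕ → Ω → ℝ) : Ω → ℝ :=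
  fun ω => ∑ z ∈ Finset.Icc 1 J, indic Z z ω * S z ω

/-- Observed outcome `Y := ∑_z 1(Z=z) ⬝ Y_z`. -/
def Yobs (J : ℕ) (Z : Ω → ℕ) (Y : ℕ → Ω → ℝ) : Ω → ℝ :=
  fun ω => ∑ z ∈ Finset.Icc 1 J, indic Z z ω * Y z ω

/-- Principal score `p_z(X) := E[S_z | σ(X)]`, with conventions `p_0 := 0` and `p_{J+1} := 1`. -/
def pscore (P : Measure Ω) (X : Ω → 𝒳) (S : ℕ → Ω → ℝ) (J : ℕ) (z : ℕ) : Ω → ℝ :=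
  if z = 0 then fun _ => 0 else if z = J + 1 then fun _ => 1 else P[S z | mX X]

/-- Treatment probability `π_z := P(Z = z)`. -/
def piZ (P : Measure Ω) (Z : Ω → ℕ) (z : ℕ) : ℝ := (P {ω | Z ω = z}).toReal

/-- Principal stratum variable `G := ∑_{z=1}^J S_z`. -/
def Gsum (J : ℕ) (S : ℕ → Ω → ℝ) : Ω → ℝ := fun ω => ∑ z ∈ Finset.Icc 1 J, S z ω

/-- Real-valued indicator of the event `{G = g}`. -/
def indG (J : ℕ) (S : ℕ → Ω → ℝ) (g : ℕ) : Ω → ℝ :=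
  Set.indicator {ω | Gsum J S ω = (g : ℝ)} (fun _ => (1 : ℝ))

/-- Principal score of the stratum `g` : `e_g(X) := E[1(G=g) | σ(X)]`. -/
def eg (P : Measure Ω) (X : Ω → 𝒳) (J : ℕ) (S : ℕ → Ω → ℝ) (g : ℕ) : Ω → ℝ :=
  P[indG J S g | mX X]

/-- Basic setup: measurability, ranges, values and integrability of the primitives. -/
structure Setup (P : Measure Ω) (J : ℕ) (X : Ω → 𝒳) (Z : Ω → ℕ)
    (S Y : ℕ → Ω → ℝ) : Prop where
  hJ : 2 ≤ J
  hX : Measurable X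
  hZ : Measurable Z
  hZr : ∀ ω, Z ω ∈ Finset.Icc 1 J
  hSm : ∀ z, Measurable (S z)
  hS01 : ∀ z ω, S z ω = 0 ∨ S z ω = 1
  hYm : ∀ z, Measurable (Y z)
  hYint : ∀ z, Integrable (Y z) P

/-- Randomization : `Z` is independent of `(X, S_1,…,S_J, Y_1,…,Y_J)` and `π_z > 0` for all
`z ∈ {1,…,J}`. -/
def Randomization (P : Measure Ω) (J : ℕ) (X : Ω → 𝒳) (Z : Ω → ℕ)
    (S Y : ℕ → Ω → ℝ) : Prop :=
  IndepFun Z (fun ω => (X ω, fun z => S z ω, fun z => Y z ω)) P ∧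
    ∀ z ∈ Finset.Icc 1 J, 0 < piZ P Z z

/-- Monotonicity : `S_{z'} ≤ S_z` a.s. whenever `z' ≤ z`. -/
def Monotonicity (P : Measure Ω) (J : ℕ) (S : ℕ → Ω → ℝ) : Prop :=
  ∀ z ∈ Finset.Icc 1 J, ∀ z' ∈ Finset.Icc 1 J, z' ≤ z → ∀ᵐ ω ∂P, S z' ω ≤ S z ω

/-- Principal ignorability. -/
def PrincipalIgnorability (P : Measure Ω) (J : ℕ) (X : Ω → 𝒳)
    (S Y : ℕ → Ω → ℝ) : Prop :=
  ∀ z ∈ Finset.Icc 1 J, ∀ g ∈ Finset.Icc (J - z + 1) J, ∀ g' ∈ Finset.Icc (J - z + 1) J,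
    (fun ω => (P[fun ω' => Y z ω' * indG J S g ω' | mX X]) ω * eg P X J S g' ω)
      =ᵐ[P] fun ω => (P[fun ω' => Y z ω' * indG J S g' ω' | mX X]) ω * eg P X J S g ω

/-- Positivity : the principal scores are uniformly bounded away from zero. -/
def Positivity (P : Measure Ω) (J : ℕ) (X : Ω → 𝒳) (S : ℕ → Ω → ℝ) : Prop :=
  ∃ c : ℝ, 0 < c ∧ ∀ z ∈ Finset.Icc 1 J, ∀ᵐ ω ∂P, c ≤ pscore P X S J z ω

/-- Without monotonicity: indicator of the principal stratum described by the set
`A ⊆ {1,…,J}` of treatment levels under which the unit survives. -/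
def indGv (J : ℕ) (S : ℕ → Ω → ℝ) (A : Finset ℕ) : Ω → ℝ :=
  Set.indicator {ω | ∀ w ∈ Finset.Icc 1 J, (S w ω = 1 ↔ w ∈ A)} (fun _ => (1 : ℝ))

/-- Principal score of the stratum `A` : `e_A(X) := E[1(G=A) | σ(X)]`. -/
def egv (P : Measure Ω) (X : Ω → 𝒳) (J : ℕ) (S : ℕ → Ω → ℝ) (A : Finset ℕ) : Ω → ℝ :=
  P[indGv J S A | mX X]

/-- The monotone stratum `𝔤_g`, surviving exactly under levels `z ≥ J − g + 1`. -/
def monoPattern (J g : ℕ) : Finset ℕ := Finset.Icc (J - g + 1) J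

/-- The collection `𝒬` of monotone strata. -/
def Qset (J : ℕ) : Finset (Finset ℕ) := (Finset.Icc 0 J).image (monoPattern J)

/-- All principal strata (subsets of `{1,…,J}`). -/
def stratSet (J : ℕ) : Finset (Finset ℕ) := (Finset.Icc 1 J).powerset

/-- The harmed strata `𝒢 ∖ 𝒬`. -/
def nonQ (J : ℕ) : Finset (Finset ℕ) := (stratSet J).filter (fun A => A ∉ Qset J)

/-- Sensitivity ratio `ρ_A(X) := e_A(X)/e_{𝔤_r}(X)`. -/
def rhoA (P : Measure Ω) (X : Ω → 𝒳) (J r : ℕ) (S : ℕ → Ω → ℝ) (A : Finset ℕ) : Ω → ℝ :=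
  fun ω => egv P X J S A ω / egv P X J S (monoPattern J r) ω

/-- `q_w(X) := ∑_{A ∉ 𝒬, w ∈ A} ρ_A(X)` for `w ∈ {1,…,J}`, with `q_0 := 0` and
`q_{J+1} := ∑_{A ∉ 𝒬} ρ_A(X)`. -/
def qfun (P : Measure Ω) (X : Ω → 𝒳) (J r : ℕ) (S : ℕ → Ω → ℝ) (w : ℕ) : Ω → ℝ :=
  if w = 0 then fun _ => 0
  else if w ≤ J then
    fun ω => ∑ A ∈ (nonQ J).filter (fun A => w ∈ A), rhoA P X J r S A ω
  else fun ω => ∑ A ∈ nonQ J, rhoA P X J r S A ω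

-- uniform filter used in qfun
def nonQf (J z : ℕ) : Finset (Finset ℕ) :=
  if z = 0 then ∅ else if z ≤ J then (nonQ J).filter (fun A => z ∈ A) else nonQ J

lemma measurableSet_strat (J : ℕ) (S : ℕ → Ω → ℝ) (hSm : ∀ z, Measurable (S z))
    (A : Finset ℕ) :
    MeasurableSet {ω : Ω | ∀ w ∈ Finset.Icc 1 J, (S w ω = 1 ↔ w ∈ A)} := by
  have h : {ω : Ω | ∀ w ∈ Finset.Icc 1 J, (S w ω = 1 ↔ w ∈ A)}
      = ⋂ w ∈ (Finset.Icc 1 J : Finset ℕ), {ω | S w ω = 1 ↔ w ∈ A} := by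
    ext ω; simp
  rw [h]
  refine MeasurableSet.biInter (Set.to_countable _) (fun w _ => ?_)
  by_cases hw : w ∈ A
  · simp only [hw, iff_true]
    exact (hSm w) (measurableSet_singleton 1)
  · simp only [hw, iff_false]
    exact ((hSm w) (measurableSet_singleton 1)).compl

lemma indGv_integrable (P : Measure Ω) [IsProbabilityMeasure P] (J : ℕ) (S : ℕ → Ω → ℝ)
    (hSm : ∀ z, Measurable (S z)) (A : Finset ℕ) : Integrable (indGv J S A) P :=
  (integrable_const (1 : ℝ)).indicator (measurableSet_strat J S hSm A)

-- pointwise facts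
lemma indGv_apply (J : ℕ) (S : ℕ → Ω → ℝ) (A : Finset ℕ) (hA : A ∈ stratSet J) (ω : Ω) :
    indGv J S A ω
      = if A = (Finset.Icc 1 J).filter (fun w => S w ω = 1) then 1 else 0 := by
  have hsub : A ⊆ Finset.Icc 1 J := Finset.mem_powerset.mp hA
  by_cases h : A = (Finset.Icc 1 J).filter (fun w => S w ω = 1)
  · rw [if_pos h]
    have : ω ∈ {ω : Ω | ∀ w ∈ Finset.Icc 1 J, (S w ω = 1 ↔ w ∈ A)} := by
      intro w hw
      subst h
      simp [Finset.mem_filter, hw]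
    exact Set.indicator_of_mem this _
  · rw [if_neg h]
    have : ω ∉ {ω : Ω | ∀ w ∈ Finset.Icc 1 J, (S w ω = 1 ↔ w ∈ A)} := by
      intro hmem
      apply h
      ext w
      simp only [Finset.mem_filter]
      constructor
      · intro hwA
        exact ⟨hsub hwA, (hmem w (hsub hwA)).mpr hwA⟩
      · rintro ⟨hw, hS⟩
        exact (hmem w hw).mp hS
    exact Set.indicator_of_notMem this _

lemma strat_mem (J : ℕ) (S : ℕ → Ω → ℝ) (ω : Ω) :
    (Finset.Icc 1 J).filter (fun w => S w ω = 1) ∈ stratSet J :=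
  Finset.mem_powerset.mpr (Finset.filter_subset _ _)

lemma sum_indGv (J : ℕ) (S : ℕ → Ω → ℝ) (ω : Ω) :
    ∑ A ∈ stratSet J, indGv J S A ω = 1 := by
  rw [Finset.sum_congr rfl (fun A hA => indGv_apply J S A hA ω)]
  rw [Finset.sum_ite_eq' (stratSet J) _ (fun _ => (1:ℝ))]
  simp [strat_mem]

lemma sum_indGv_filter (J z : ℕ) (S : ℕ → Ω → ℝ) (hS01 : ∀ z ω, S z ω = 0 ∨ S z ω = 1)
    (hz : z ∈ Finset.Icc 1 J) (ω : Ω) :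
    ∑ A ∈ (stratSet J).filter (fun A => z ∈ A), indGv J S A ω = S z ω := by
  rw [Finset.sum_congr rfl
    (fun A hA => indGv_apply J S A (Finset.mem_of_mem_filter A hA) ω)]
  rw [Finset.sum_ite_eq' _ _ (fun _ => (1:ℝ))]
  rcases hS01 z ω with h0 | h1
  · rw [if_neg, h0]
    intro hmem
    rw [Finset.mem_filter] at hmem
    have h2 := Finset.mem_filter.mp hmem.2
    exact one_ne_zero (h2.2.symm.trans h0)
  · rw [if_pos, h1]
    exact Finset.mem_filter.mpr ⟨strat_mem J S ω, Finset.mem_filter.mpr ⟨hz, h1⟩⟩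


lemma qsub (J : ℕ) : Qset J ⊆ stratSet J := by
  intro A hA
  rw [Qset, Finset.mem_image] at hA
  obtain ⟨g, hg, rfl⟩ := hA
  refine Finset.mem_powerset.mpr ?_
  intro w hw
  rw [monoPattern, Finset.mem_Icc] at hw
  rw [Finset.mem_Icc]
  omega

lemma mono_inj (J : ℕ) : ∀ a ∈ Finset.Icc 0 J, ∀ b ∈ Finset.Icc 0 J,
    monoPattern J a = monoPattern J b → a = b := by
  have hcard : ∀ g, g ≤ J → (monoPattern J g).card = g := by
    intro g hg; rw [monoPattern, Nat.card_Icc]; omega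
  intro a ha b hb h
  rw [Finset.mem_Icc] at ha hb
  rw [← hcard a ha.2, ← hcard b hb.2, h]

lemma sum_strat_split (J : ℕ) (f : Finset ℕ → ℝ) :
    ∑ A ∈ stratSet J, f A
      = (∑ g' ∈ Finset.Icc 0 J, f (monoPattern J g')) + ∑ A ∈ nonQ J, f A := by
  rw [← Finset.sum_filter_add_sum_filter_not (stratSet J) (· ∈ Qset J) f]
  congr 1
  · rw [Finset.filter_mem_eq_inter, Finset.inter_eq_right.mpr (qsub J), Qset,
      Finset.sum_image (mono_inj J)]

lemma sum_strat_filter_split (J z : ℕ) (hz1 : 1 ≤ z) (hz2 : z ≤ J) (f : Finset ℕ → ℝ) :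
    ∑ A ∈ (stratSet J).filter (fun A => z ∈ A), f A
      = (∑ g' ∈ Finset.Icc (J + 1 - z) J, f (monoPattern J g'))
        + ∑ A ∈ (nonQ J).filter (fun A => z ∈ A), f A := by
  rw [← Finset.sum_filter_add_sum_filter_not ((stratSet J).filter (fun A => z ∈ A))
    (· ∈ Qset J) f]
  congr 1
  · have h1 : ((stratSet J).filter (fun A => z ∈ A)).filter (· ∈ Qset J)
        = (Qset J).filter (fun A => z ∈ A) := by
      rw [Finset.filter_comm, Finset.filter_mem_eq_inter,
        Finset.inter_eq_right.mpr (qsub J)]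
    have h2 : ((Finset.Icc 0 J).filter (fun g' => z ∈ monoPattern J g'))
        = Finset.Icc (J + 1 - z) J := by
      ext g'
      simp only [Finset.mem_filter, monoPattern, Finset.mem_Icc]
      omega
    rw [h1, Qset, Finset.filter_image,
      Finset.sum_image (fun a ha b hb h =>
        mono_inj J a (Finset.mem_of_mem_filter a ha) b (Finset.mem_of_mem_filter b hb) h),
      h2]
  · rw [Finset.filter_comm]
    rfl

lemma hsum_condexp (P : Measure Ω) [IsProbabilityMeasure P] (J : ℕ) (X : Ω → 𝒳)
    (S : ℕ → Ω → ℝ) (hSm : ∀ z, Measurable (S z)) (s : Finset (Finset ℕ)) :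
    P[fun ω => ∑ A ∈ s, indGv J S A ω | mX X]
      =ᵐ[P] fun ω => ∑ A ∈ s, egv P X J S A ω := by
  have h := condExp_finset_sum (μ := P) (m := mX X) (s := s)
    (f := fun A => indGv J S A) (fun A _ => indGv_integrable P J S hSm A)
  have e1 : (∑ A ∈ s, indGv J S A) = fun ω => ∑ A ∈ s, indGv J S A ω := by
    funext ω; rw [Finset.sum_apply]
  have e2 : (∑ A ∈ s, P[indGv J S A | mX X]) = fun ω => ∑ A ∈ s, egv P X J S A ω := by
    funext ω; rw [Finset.sum_apply]; rfl
  rw [e1, e2] at h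
  exact h

lemma pscore_split (P : Measure Ω) [IsProbabilityMeasure P] (J : ℕ) (X : Ω → 𝒳)
    (S : ℕ → Ω → ℝ) (hX : Measurable X) (hSm : ∀ z, Measurable (S z))
    (hS01 : ∀ z ω, S z ω = 0 ∨ S z ω = 1) (z : ℕ) (hz : z ≤ J + 1) :
    pscore P X S J z =ᵐ[P] fun ω =>
      (∑ g' ∈ Finset.Icc (J + 1 - z) J, egv P X J S (monoPattern J g') ω)
        + ∑ A ∈ nonQf J z, egv P X J S A ω := by
  have hm : mX X ≤ (inferInstance : MeasurableSpace Ω) := hX.comap_le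
  rcases Nat.eq_zero_or_pos z with rfl | hz1
  · rw [pscore, if_pos rfl]
    have he : Finset.Icc (J + 1 - 0) J = (∅ : Finset ℕ) := Finset.Icc_eq_empty (by omega)
    refine Filter.Eventually.of_forall fun ω => ?_
    simp [nonQf, he]
  · rcases eq_or_lt_of_le hz with rfl | hzJ
    · rw [pscore, if_neg (by omega), if_pos rfl]
      have hfg : (fun ω => ∑ A ∈ stratSet J, indGv J S A ω) = (fun _ : Ω => (1 : ℝ)) := by
        funext ω; exact sum_indGv J S ω
      have h := hsum_condexp P J X S hSm (stratSet J)
      rw [hfg, condExp_const hm] at h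
      refine h.trans (Filter.Eventually.of_forall fun ω => ?_)
      beta_reduce
      rw [sum_strat_split J (fun A => egv P X J S A ω)]
      have : nonQf J (J + 1) = nonQ J := by simp [nonQf]
      rw [this]
      norm_num
    · have hzJ' : z ≤ J := by omega
      rw [pscore, if_neg (by omega), if_neg (by omega)]
      have h0 : S z
          = fun ω => ∑ A ∈ (stratSet J).filter (fun A => z ∈ A), indGv J S A ω := by
        funext ω
        exact (sum_indGv_filter J z S hS01 (Finset.mem_Icc.mpr ⟨hz1, hzJ'⟩) ω).symm
      rw [h0]
      refine (hsum_condexp P J X S hSm _).trans (Filter.Eventually.of_forall fun ω => ?_)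
      beta_reduce
      rw [sum_strat_filter_split J z hz1 hzJ' (fun A => egv P X J S A ω)]
      have : nonQf J z = (nonQ J).filter (fun A => z ∈ A) := by
        rw [nonQf, if_neg (by omega), if_pos hzJ']
      rw [this]

lemma qfun_eq (P : Measure Ω) (X : Ω → 𝒳) (J r : ℕ) (S : ℕ → Ω → ℝ) (w : ℕ) (ω : Ω) :
    qfun P X J r S w ω = ∑ A ∈ nonQf J w, rhoA P X J r S A ω := by
  rw [qfun, nonQf]
  split_ifs <;> simp

lemma keyF (P : Measure Ω) [IsProbabilityMeasure P] (J : ℕ) (X : Ω → 𝒳)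
    (S : ℕ → Ω → ℝ) (hX : Measurable X) (hSm : ∀ z, Measurable (S z))
    (hS01 : ∀ z ω, S z ω = 0 ∨ S z ω = 1) (g : ℕ) (hg : g ≤ J) :
    (fun ω => pscore P X S J (J - g + 1) ω - pscore P X S J (J - g) ω)
      =ᵐ[P] fun ω => egv P X J S (monoPattern J g) ω
        + ((∑ A ∈ nonQf J (J - g + 1), egv P X J S A ω)
          - ∑ A ∈ nonQf J (J - g), egv P X J S A ω) := by
  have h1 := pscore_split P J X S hX hSm hS01 (J - g + 1) (by omega)
  have h2 := pscore_split P J X S hX hSm hS01 (J - g) (by omega)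
  filter_upwards [h1, h2] with ω e1 e2
  rw [e1, e2]
  have i1 : J + 1 - (J - g + 1) = g := by omega
  have i2 : J + 1 - (J - g) = g + 1 := by omega
  have hins : Finset.Icc g J = insert g (Finset.Icc (g + 1) J) := by
    ext x; simp only [Finset.mem_Icc, Finset.mem_insert]; omega
  rw [i1, i2, hins, Finset.sum_insert (by simp)]
  ring


theorem statement18' (P : Measure Ω) [IsProbabilityMeasure P] (J : ℕ)
    (X : Ω → 𝒳) (S : ℕ → Ω → ℝ)
    (hX : Measurable X) (hSm : ∀ z, Measurable (S z))
    (hS01 : ∀ z ω, S z ω = 0 ∨ S z ω = 1)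
    (r : ℕ) (hr : r ≤ J)
    (hc : ∃ c : ℝ, 0 < c ∧ ∀ᵐ ω ∂P, c ≤ egv P X J S (monoPattern J r) ω) :
    ((fun ω => egv P X J S (monoPattern J r) ω
        * (1 + qfun P X J r S (J - r + 1) ω - qfun P X J r S (J - r) ω))
      =ᵐ[P] fun ω => pscore P X S J (J - r + 1) ω - pscore P X S J (J - r) ω) ∧
    (∀ A ∈ nonQ J,
      (fun ω => egv P X J S A ω
          * (1 + qfun P X J r S (J - r + 1) ω - qfun P X J r S (J - r) ω))
        =ᵐ[P] fun ω => rhoA P X J r S A ω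
          * (pscore P X S J (J - r + 1) ω - pscore P X S J (J - r) ω)) ∧
    (∀ g ∈ Finset.Icc 0 J,
      egv P X J S (monoPattern J g)
        =ᵐ[P] fun ω => pscore P X S J (J - g + 1) ω - pscore P X S J (J - g) ω
          - egv P X J S (monoPattern J r) ω
            * (qfun P X J r S (J - g + 1) ω - qfun P X J r S (J - g) ω)) := by
  obtain ⟨c, hc0, hcae⟩ := hc
  have hpos : ∀ᵐ ω ∂P, 0 < egv P X J S (monoPattern J r) ω :=
    hcae.mono fun ω h => lt_of_lt_of_le hc0 h
  have hqT : ∀ᵐ ω ∂P, ∀ w, egv P X J S (monoPattern J r) ω * qfun P X J r S w ω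
      = ∑ A ∈ nonQf J w, egv P X J S A ω := by
    filter_upwards [hpos] with ω hp w
    rw [qfun_eq, Finset.mul_sum]
    refine Finset.sum_congr rfl fun A _ => ?_
    rw [rhoA]
    field_simp
  have partA : (fun ω => egv P X J S (monoPattern J r) ω
      * (1 + qfun P X J r S (J - r + 1) ω - qfun P X J r S (J - r) ω))
      =ᵐ[P] fun ω => pscore P X S J (J - r + 1) ω - pscore P X S J (J - r) ω := by
    filter_upwards [keyF P J X S hX hSm hS01 r hr, hqT] with ω e hq
    have hq1 := hq (J - r + 1)
    have hq2 := hq (J - r)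
    beta_reduce
    rw [e, ← hq1, ← hq2]
    ring
  refine ⟨partA, fun A _ => ?_, fun g hg => ?_⟩
  · filter_upwards [partA, hpos] with ω pa hp
    have hA : egv P X J S A ω = rhoA P X J r S A ω * egv P X J S (monoPattern J r) ω := by
      rw [rhoA]; field_simp
    beta_reduce
    rw [hA, mul_assoc, pa]
  · rw [Finset.mem_Icc] at hg
    filter_upwards [keyF P J X S hX hSm hS01 g hg.2, hqT] with ω e hq
    have hq1 := hq (J - g + 1)
    have hq2 := hq (J - g)
    beta_reduce
    rw [e, mul_sub, hq1, hq2]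
    ring


/-- **identification of principal scores without monotonicity.** -/
theorem statement18 (P : Measure Ω) [IsProbabilityMeasure P] (J : ℕ)
    (X : Ω → 𝒳) (Z : Ω → ℕ) (S Y : ℕ → Ω → ℝ)
    (hset : Setup P J X Z S Y)
    (r : ℕ) (hr : r ≤ J)
    (hc : ∃ c : ℝ, 0 < c ∧ ∀ᵐ ω ∂P, c ≤ egv P X J S (monoPattern J r) ω) :
    ((fun ω => egv P X J S (monoPattern J r) ω
        * (1 + qfun P X J r S (J - r + 1) ω - qfun P X J r S (J - r) ω))
      =ᵐ[P] fun ω => pscore P X S J (J - r + 1) ω - pscore P X S J (J - r) ω) ∧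
    (∀ A ∈ nonQ J,
      (fun ω => egv P X J S A ω
          * (1 + qfun P X J r S (J - r + 1) ω - qfun P X J r S (J - r) ω))
        =ᵐ[P] fun ω => rhoA P X J r S A ω
          * (pscore P X S J (J - r + 1) ω - pscore P X S J (J - r) ω)) ∧
    (∀ g ∈ Finset.Icc 0 J,
      egv P X J S (monoPattern J g)
        =ᵐ[P] fun ω => pscore P X S J (J - g + 1) ω - pscore P X S J (J - g) ω
          - egv P X J S (monoPattern J r) ω
            * (qfun P X J r S (J - g + 1) ω - qfun P X J r S (J - g) ω)) := by
  exact statement18' P J X S hset.hX hset.hSm hset.hS01 r hr hc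

end TruncationByDeath
end
end

section
/- (Identification without monotonicity under extended principal ignorability.) Assume randomization, extended principal ignorability, and that there is c > 0 with p_z(X) ≥ c P-a.s. Let m_z(X) be a σ(X)-measurable function satisfying m_z(X)·π_z·p_z(X) = E[Y·S·1(Z=z) | σ(X)] P-a.s. Then for every z ∈ {1,...,J} and every 𝔤 ∈ {0,1}^J with 𝔤(z) = 1: E[Y_z·1(G=𝔤)] = E[e_𝔤(X)·m_z(X)]. -/
open MeasureTheory ProbabilityTheory

noncomputable section

namespace TruncationByDeath

variable {Ω : Type*} {𝒳 : Type*} [MeasurableSpace Ω] [MeasurableSpace 𝒳]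

section AuxLemmas

variable {P : Measure Ω} {J : ℕ} {X : Ω → 𝒳} {S Y : ℕ → Ω → ℝ}

lemma indGv_set_measurable (hSm : ∀ z, Measurable (S z)) (A : Finset ℕ) :
    MeasurableSet {ω | ∀ w ∈ Finset.Icc 1 J, (S w ω = 1 ↔ w ∈ A)} := by
  have h : {ω | ∀ w ∈ Finset.Icc 1 J, (S w ω = 1 ↔ w ∈ A)}
      = ⋂ w ∈ (Finset.Icc 1 J : Finset ℕ), {ω | S w ω = 1 ↔ w ∈ A} := by
    ext ω; simp
  rw [h]
  refine MeasurableSet.biInter (Finset.Icc 1 J).countable_toSet (fun w _ => ?_)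
  by_cases hw : w ∈ A
  · simp only [hw, iff_true]
    exact hSm w (measurableSet_singleton 1)
  · simp only [hw, iff_false]
    exact (hSm w (measurableSet_singleton 1)).compl

lemma indGv_measurable (hSm : ∀ z, Measurable (S z)) (A : Finset ℕ) :
    Measurable (indGv J S A) :=
  measurable_const.indicator (indGv_set_measurable hSm A)

lemma indGv_bound (A : Finset ℕ) (ω : Ω) : ‖indGv J S A ω‖ ≤ 1 := by
  unfold indGv
  rw [Set.indicator_apply]
  split <;> simp

lemma integrable_mul_indGv (hSm : ∀ z, Measurable (S z))
    (z : ℕ) (hY : Integrable (Y z) P) (A : Finset ℕ) :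
    Integrable (fun ω => Y z ω * indGv J S A ω) P := by
  have h := hY.bdd_mul ((indGv_measurable (J := J) hSm A)).aestronglyMeasurable
    (c := 1) (Filter.Eventually.of_forall (indGv_bound (J := J) A))
  refine h.congr (Filter.Eventually.of_forall fun ω => ?_)
  ring

lemma indGv_eq_ite (hS01 : ∀ z ω, S z ω = 0 ∨ S z ω = 1) {A : Finset ℕ}
    (hA : A ∈ stratSet J) (ω : Ω) :
    indGv J S A ω
      = if A = (Finset.Icc 1 J).filter (fun w => S w ω = 1) then 1 else 0 := by
  have hAsub : A ⊆ Finset.Icc 1 J := Finset.mem_powerset.mp hA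
  unfold indGv
  rw [Set.indicator_apply]
  congr 1
  simp only [Set.mem_setOf_eq, eq_iff_iff]
  constructor
  · intro h
    ext w
    simp only [Finset.mem_filter]
    constructor
    · intro hw
      exact ⟨hAsub hw, (h w (hAsub hw)).mpr hw⟩
    · intro ⟨hw1, hw2⟩
      exact (h w hw1).mp hw2
  · intro h w hw
    subst h
    simp only [Finset.mem_filter]
    exact ⟨fun hs => ⟨hw, hs⟩, fun ⟨_, hs⟩ => hs⟩

lemma S_eq_sum_indGv (hS01 : ∀ z ω, S z ω = 0 ∨ S z ω = 1) {z : ℕ}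
    (hz : z ∈ Finset.Icc 1 J) (ω : Ω) :
    S z ω = ∑ A ∈ (stratSet J).filter (fun A => z ∈ A), indGv J S A ω := by
  set Aω : Finset ℕ := (Finset.Icc 1 J).filter (fun w => S w ω = 1) with hAω
  have hsum : ∑ A ∈ (stratSet J).filter (fun A => z ∈ A), indGv J S A ω
      = ∑ A ∈ (stratSet J).filter (fun A => z ∈ A), if A = Aω then 1 else 0 := by
    refine Finset.sum_congr rfl fun A hA => ?_
    exact indGv_eq_ite hS01 (Finset.mem_filter.mp hA).1 ω
  rw [hsum, Finset.sum_ite_eq' ((stratSet J).filter (fun A => z ∈ A)) Aω (fun _ => (1:ℝ))]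
  have hAmem : Aω ∈ (stratSet J).filter (fun A => z ∈ A) ↔ S z ω = 1 := by
    constructor
    · intro h
      have hzA : z ∈ Aω := (Finset.mem_filter.mp h).2
      exact (Finset.mem_filter.mp hzA).2
    · intro hs
      refine Finset.mem_filter.mpr ⟨?_, Finset.mem_filter.mpr ⟨hz, hs⟩⟩
      exact Finset.mem_powerset.mpr (Finset.filter_subset _ _)
  by_cases hs : S z ω = 1
  · rw [if_pos (hAmem.mpr hs), hs]
  · rw [if_neg (fun hmem => hs (hAmem.mp hmem))]
    rcases hS01 z ω with h0 | h1
    · exact h0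
    · exact absurd h1 hs

end AuxLemmas

/-- **identification without monotonicity under extended principal
ignorability.** For every `z ∈ {1,…,J}` and every stratum `A` with `z ∈ A`,
`E[Y_z·1(G=A)] = E[e_A(X)·m_z(X)]`. -/
theorem statement19 (P : Measure Ω) [IsProbabilityMeasure P] (J : ℕ)
    (X : Ω → 𝒳) (Z : Ω → ℕ) (S Y : ℕ → Ω → ℝ)
    (hset : Setup P J X Z S Y)
    (hrand : Randomization P J X Z S Y)
    (hEPI : ∀ z ∈ Finset.Icc 1 J, ∀ A ∈ stratSet J, ∀ A' ∈ stratSet J,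
      z ∈ A → z ∈ A' →
      (fun ω => (P[fun ω' => Y z ω' * indGv J S A ω' | mX X]) ω * egv P X J S A' ω)
        =ᵐ[P] fun ω =>
          (P[fun ω' => Y z ω' * indGv J S A' ω' | mX X]) ω * egv P X J S A ω)
    (hpos : Positivity P J X S) :
    ∀ z ∈ Finset.Icc 1 J, ∀ A ∈ stratSet J, z ∈ A →
      ∀ mz : Ω → ℝ, Measurable[mX X] mz →
      ((fun ω => mz ω * piZ P Z z * pscore P X S J z ω)
        =ᵐ[P] P[fun ω => Yobs J Z Y ω * Sobs J Z S ω * indic Z z ω | mX X]) →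
      ∫ ω, Y z ω * indGv J S A ω ∂P = ∫ ω, egv P X J S A ω * mz ω ∂P := by
  classical
  intro z hz A hA hzA mz hmzmeas hmz
  obtain ⟨hz1, hzJ⟩ := Finset.mem_Icc.mp hz
  have hm : mX X ≤ ‹MeasurableSpace Ω› := hset.hX.comap_le
  -- basic bounds and integrability
  have hSbd : ∀ w (ω : Ω), ‖S w ω‖ ≤ 1 := by
    intro w ω; rcases hset.hS01 w ω with h | h <;> simp [h]
  have hYS : Integrable (fun ω => Y z ω * S z ω) P := by
    have h := (hset.hYint z).bdd_mul (hset.hSm z).aestronglyMeasurable (c := 1) (Filter.Eventually.of_forall (hSbd z))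
    exact h.congr (Filter.Eventually.of_forall fun ω => by ring)
  have hYA : ∀ A' : Finset ℕ, Integrable (fun ω => Y z ω * indGv J S A' ω) P :=
    fun A' => integrable_mul_indGv hset.hSm z (hset.hYint z) A'
  have hSint : ∀ w, Integrable (S w) P :=
    fun w => (integrable_const (1:ℝ)).mono' (hset.hSm w).aestronglyMeasurable
      (Filter.Eventually.of_forall (hSbd w))
  have hindGvInt : ∀ A' : Finset ℕ, Integrable (indGv J S A') P := by
    intro A'
    refine (integrable_const (1:ℝ)).mono'
      (indGv_measurable (J := J) hset.hSm A').aestronglyMeasurable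
      (Filter.Eventually.of_forall fun ω => indGv_bound (J := J) A' ω)
  -- set of strata containing z
  set T : Finset (Finset ℕ) := (stratSet J).filter (fun A' => z ∈ A') with hT
  -- decomposition of Y z * S z
  have hYSsum : (fun ω => Y z ω * S z ω)
      = ∑ A' ∈ T, (fun ω => Y z ω * indGv J S A' ω) := by
    funext ω
    rw [Finset.sum_apply, S_eq_sum_indGv hset.hS01 hz ω, Finset.mul_sum]
  have hce1 : P[(fun ω => Y z ω * S z ω)|mX X]
      =ᵐ[P] ∑ A' ∈ T, P[(fun ω => Y z ω * indGv J S A' ω)|mX X] := by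
    rw [hYSsum]
    exact condExp_finsetSum (fun A' _ => hYA A') (mX X)
  have hSsum : S z = ∑ A' ∈ T, indGv J S A' := by
    funext ω
    rw [Finset.sum_apply]
    exact S_eq_sum_indGv hset.hS01 hz ω
  have hce2 : P[S z|mX X] =ᵐ[P] ∑ A' ∈ T, P[indGv J S A'|mX X] := by
    rw [hSsum]
    exact condExp_finsetSum (fun A' _ => hindGvInt A') (mX X)
  -- extended principal ignorability, pointwise a.e. over all strata in T
  have hEPIae : ∀ᵐ ω ∂P, ∀ A' ∈ T,
      (P[fun ω' => Y z ω' * indGv J S A' ω'|mX X]) ω * egv P X J S A ω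
        = (P[fun ω' => Y z ω' * indGv J S A ω'|mX X]) ω * egv P X J S A' ω := by
    have h := (ae_ball_iff T.countable_toSet).2 (fun (A' : Finset ℕ)
      (hA' : A' ∈ (↑T : Set (Finset ℕ))) =>
        hEPI z hz A' (Finset.mem_filter.mp (Finset.mem_coe.mp hA')).1 A hA
          (Finset.mem_filter.mp (Finset.mem_coe.mp hA')).2 hzA)
    filter_upwards [h] with ω hω A' hA'
    exact hω A' (Finset.mem_coe.mpr hA')
  -- the EPI chain
  have hchain : (fun ω => egv P X J S A ω * (P[fun ω' => Y z ω' * S z ω'|mX X]) ω)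
      =ᵐ[P] fun ω => (P[fun ω' => Y z ω' * indGv J S A ω'|mX X]) ω * (P[S z|mX X]) ω := by
    filter_upwards [hce1, hce2, hEPIae] with ω h1 h2 h3
    rw [h1, h2, Finset.sum_apply, Finset.sum_apply, Finset.mul_sum, Finset.mul_sum]
    refine Finset.sum_congr rfl fun A' hA' => ?_
    exact (mul_comm _ _).trans (h3 A' hA')
  -- independence step
  have hπpos : 0 < piZ P Z z := hrand.2 z hz
  have hψ : Measurable (fun n : ℕ => if n = z then (1:ℝ) else 0) := measurable_from_nat
  have hψZ : Measurable (indic Z z) := hψ.comp hset.hZ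
  have hindicbd : ∀ ω, ‖indic Z z ω‖ ≤ 1 := by
    intro ω; unfold indic; split <;> simp
  have hindicInt : Integrable (indic Z z) P :=
    (integrable_const (1:ℝ)).mono' hψZ.aestronglyMeasurable
      (Filter.Eventually.of_forall hindicbd)
  have hWint : Integrable (fun ω => indic Z z ω * (Y z ω * S z ω)) P :=
    hYS.bdd_mul hψZ.aestronglyMeasurable (c := 1) (Filter.Eventually.of_forall hindicbd)
  have hkey : (fun ω => piZ P Z z * (P[fun ω' => Y z ω' * S z ω'|mX X]) ω)
      =ᵐ[P] P[fun ω => indic Z z ω * (Y z ω * S z ω)|mX X] := by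
    refine ae_eq_condExp_of_forall_setIntegral_eq hm hWint
      (fun s _ _ => (integrable_condExp.const_mul _).integrableOn) ?_ ?_
    · rintro s ⟨t, ht, rfl⟩ -
      rw [integral_const_mul, setIntegral_condExp hm hYS ⟨t, ht, rfl⟩]
      have hsm : MeasurableSet (X ⁻¹' t) := hset.hX ht
      -- independence of the two factors
      have hφ : Measurable (fun p : 𝒳 × (ℕ → ℝ) × (ℕ → ℝ) =>
          Set.indicator t (fun _ => (1:ℝ)) p.1 * (p.2.2 z * p.2.1 z)) := by
        refine ((measurable_const.indicator ht).comp measurable_fst).mul ?_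
        exact ((measurable_pi_apply z).comp (measurable_snd.comp measurable_snd)).mul
          ((measurable_pi_apply z).comp (measurable_fst.comp measurable_snd))
      have hIndep2 : IndepFun ((fun n : ℕ => if n = z then (1:ℝ) else 0) ∘ Z)
          ((fun p : 𝒳 × (ℕ → ℝ) × (ℕ → ℝ) =>
            Set.indicator t (fun _ => (1:ℝ)) p.1 * (p.2.2 z * p.2.1 z))
            ∘ (fun ω => (X ω, fun w => S w ω, fun w => Y w ω))) P :=
        hrand.1.comp hψ hφ
      have hφint : Integrable ((fun p : 𝒳 × (ℕ → ℝ) × (ℕ → ℝ) =>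
          Set.indicator t (fun _ => (1:ℝ)) p.1 * (p.2.2 z * p.2.1 z))
          ∘ (fun ω => (X ω, fun w => S w ω, fun w => Y w ω))) P := by
        refine hYS.bdd_mul ?_ (c := 1) (Filter.Eventually.of_forall fun ω => ?_)
        · exact ((measurable_const.indicator ht).comp hset.hX).aestronglyMeasurable
        · rw [Set.indicator_apply]; split <;> simp
      have hmul := hIndep2.integral_mul_eq_mul_integral hindicInt.aestronglyMeasurable hφint.aestronglyMeasurable
      have hintψ : ∫ ω, ((fun n : ℕ => if n = z then (1:ℝ) else 0) ∘ Z) ω ∂P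
          = piZ P Z z := by
        have heq : ((fun n : ℕ => if n = z then (1:ℝ) else 0) ∘ Z)
            = (Z ⁻¹' {z}).indicator (fun _ => (1:ℝ)) := by
          funext ω
          simp [Set.indicator_apply, Set.mem_preimage, Function.comp]
        rw [heq, integral_indicator (hset.hZ (measurableSet_singleton z)),
          setIntegral_const, smul_eq_mul, mul_one]
        rfl
      have hintφ : ∫ ω, ((fun p : 𝒳 × (ℕ → ℝ) × (ℕ → ℝ) =>
          Set.indicator t (fun _ => (1:ℝ)) p.1 * (p.2.2 z * p.2.1 z))
          ∘ (fun ω => (X ω, fun w => S w ω, fun w => Y w ω))) ω ∂P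
          = ∫ ω in X ⁻¹' t, Y z ω * S z ω ∂P := by
        rw [← integral_indicator hsm]
        congr 1
        funext ω
        by_cases h : X ω ∈ t <;>
          simp [Set.indicator_apply, h, Function.comp, Set.mem_preimage]
      calc piZ P Z z * ∫ ω in X ⁻¹' t, Y z ω * S z ω ∂P
          = ∫ ω, (((fun n : ℕ => if n = z then (1:ℝ) else 0) ∘ Z)
              * ((fun p : 𝒳 × (ℕ → ℝ) × (ℕ → ℝ) =>
                Set.indicator t (fun _ => (1:ℝ)) p.1 * (p.2.2 z * p.2.1 z))
                ∘ (fun ω => (X ω, fun w => S w ω, fun w => Y w ω)))) ω ∂P := by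
            rw [hmul, hintψ, hintφ]
        _ = ∫ ω in X ⁻¹' t, indic Z z ω * (Y z ω * S z ω) ∂P := by
            rw [← integral_indicator hsm]
            congr 1
            funext ω
            by_cases h : X ω ∈ t <;>
              simp [Set.indicator_apply, h, Function.comp, Set.mem_preimage, indic] <;> ring
    · have hsm' : AEStronglyMeasurable[mX X]
          (P[fun ω' => Y z ω' * S z ω'|mX X]) P :=
        StronglyMeasurable.aestronglyMeasurable stronglyMeasurable_condExp
      exact hsm'.const_smul (piZ P Z z)
  -- rewrite the observed-data conditional expectation
  have hfuneq : (fun ω => Yobs J Z Y ω * Sobs J Z S ω * indic Z z ω)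
      = (fun ω => indic Z z ω * (Y z ω * S z ω)) := by
    funext ω
    by_cases h : Z ω = z
    · have hYo : Yobs J Z Y ω = Y z ω := by
        unfold Yobs
        rw [Finset.sum_eq_single z]
        · simp [indic, h]
        · intro w hw hwz; simp [indic, h, Ne.symm hwz]
        · intro hzmem; exact absurd hz hzmem
      have hSo : Sobs J Z S ω = S z ω := by
        unfold Sobs
        rw [Finset.sum_eq_single z]
        · simp [indic, h]
        · intro w hw hwz; simp [indic, h, Ne.symm hwz]
        · intro hzmem; exact absurd hz hzmem
      rw [hYo, hSo]; simp [indic, h]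
    · simp [indic, h]
  rw [hfuneq] at hmz
  -- pscore is the conditional expectation
  have hpz : pscore P X S J z = P[S z|mX X] := by
    unfold pscore
    rw [if_neg (by omega), if_neg (by omega)]
  -- main identification of mz
  have hmain : (fun ω => mz ω * pscore P X S J z ω)
      =ᵐ[P] P[fun ω' => Y z ω' * S z ω'|mX X] := by
    filter_upwards [hmz, hkey] with ω h1 h2
    have h3 : piZ P Z z * (mz ω * pscore P X S J z ω)
        = piZ P Z z * ((P[fun ω' => Y z ω' * S z ω'|mX X]) ω) := by
      rw [h2, ← h1]; ring
    exact mul_left_cancel₀ (ne_of_gt hπpos) h3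
  -- positivity
  obtain ⟨c, hc, hcle⟩ := hpos
  have hple := hcle z hz
  -- final a.e. identity
  have hfinal : (fun ω => egv P X J S A ω * mz ω)
      =ᵐ[P] P[fun ω' => Y z ω' * indGv J S A ω'|mX X] := by
    filter_upwards [hmain, hchain, hple] with ω h1 h2 h3
    have hpne : (P[S z|mX X]) ω ≠ 0 := by
      rw [← hpz]; exact ne_of_gt (lt_of_lt_of_le hc h3)
    have h4 : egv P X J S A ω * mz ω * (P[S z|mX X]) ω
        = (P[fun ω' => Y z ω' * indGv J S A ω'|mX X]) ω * (P[S z|mX X]) ω := by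
      rw [← h2, ← h1, hpz]; ring
    exact mul_right_cancel₀ hpne h4
  rw [integral_congr_ae hfinal, integral_condExp hm]

end TruncationByDeath
end
end
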